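/- Let Z be a set of sites and (i,j) a site with rank(Z ∪ {(i,j)}) = rank(Z) + 1. Then I_k(Z ∪ {(i,j)}) = I_k(Z)/i, where I/i = {X : X ∪ {i} ∈ I}. -/

import Mathlib

open Finset

variable {m n : ℕ}

/-- A set of sites is independent (an assignment) if no two of its sites share
a row or a column. -/
def Indep (π : Finset (Fin m × Fin n)) : Prop :=
  ∀ p ∈ π, ∀ q ∈ π, p ≠ q → p.1 ≠ q.1 ∧ p.2 ≠ q.2

/-- The cost of a set of sites in the matrix `M`. -/
def cost (M : Fin m → Fin n → ℝ) (π : Finset (Fin m × Fin n)) : ℝ :=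
  ∑ p ∈ π, M p.1 p.2

/-- `π` is an optimal `k`-assignment in `M`. -/
def IsOptAssign (M : Fin m → Fin n → ℝ) (k : ℕ) (π : Finset (Fin m × Fin n)) : Prop :=
  Indep π ∧ π.card = k ∧
    ∀ σ : Finset (Fin m × Fin n), Indep σ → σ.card = k → cost M π ≤ cost M σ

/-- The set of files consisting of the rows `X` and the columns `Y` covers `Z`. -/
def Covers (X : Finset (Fin m)) (Y : Finset (Fin n)) (Z : Finset (Fin m × Fin n)) : Prop :=
  ∀ p ∈ Z, p.1 ∈ X ∨ p.2 ∈ Y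

/-- `(X, Y)` is a minimum-size cover of `Z`. -/
def IsOptCover (Z : Finset (Fin m × Fin n)) (X : Finset (Fin m)) (Y : Finset (Fin n)) : Prop :=
  Covers X Y Z ∧ ∀ (X' : Finset (Fin m)) (Y' : Finset (Fin n)),
    Covers X' Y' Z → X.card + Y.card ≤ X'.card + Y'.card

/-- `X` is a set of rows which is a partial `(k-1)`-cover of `Z`: it is
contained in a cover of `Z` by at most `k - 1` files. -/
def InIk (k : ℕ) (Z : Finset (Fin m × Fin n)) (X : Finset (Fin m)) : Prop :=
  ∃ (A : Finset (Fin m)) (B : Finset (Fin n)),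
    X ⊆ A ∧ Covers A B Z ∧ A.card + B.card ≤ k - 1

/-- `Z` has rank `r`: `r` is the maximum size of an independent subset of `Z`. -/
def IsRank (Z : Finset (Fin m × Fin n)) (r : ℕ) : Prop :=
  (∃ μ : Finset (Fin m × Fin n), μ ⊆ Z ∧ Indep μ ∧ μ.card = r) ∧
  ∀ μ : Finset (Fin m × Fin n), μ ⊆ Z → Indep μ → μ.card ≤ r

lemma indep_card_le_cover (Z : Finset (Fin m × Fin n)) (A : Finset (Fin m)) (B : Finset (Fin n))
    (hcov : Covers A B Z) (μ : Finset (Fin m × Fin n)) (hμZ : μ ⊆ Z) (hμ : Indep μ) :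
    μ.card ≤ A.card + B.card := by
  classical
  rw [← Finset.card_disjSum A B]
  apply Finset.card_le_card_of_injOn (fun p => if p.1 ∈ A then Sum.inl p.1 else Sum.inr p.2)
  · intro p hp
    by_cases h : p.1 ∈ A
    · simp [h]
    · rcases hcov p (hμZ hp) with h' | h'
      · exact absurd h' h
      · simp [h, h']
  · intro p hp q hq hpq
    by_contra hne
    obtain ⟨h1, h2⟩ := hμ p hp q hq hne
    by_cases ha : p.1 ∈ A <;> by_cases hb : q.1 ∈ A <;> simp [ha, hb] at hpq
    · exact h1 hpq
    · exact h2 hpq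

lemma exists_cover_card_le_rank (Z : Finset (Fin m × Fin n)) (r : ℕ) (hr : IsRank Z r) :
    ∃ (A : Finset (Fin m)) (B : Finset (Fin n)), Covers A B Z ∧ A.card + B.card ≤ r := by
  classical
  set Rows : Finset (Fin m) := Z.image Prod.fst with hRows
  set N : Finset (Fin m) → Finset (Fin n) :=
    fun S => (Z.filter (fun p => p.1 ∈ S)).image Prod.snd with hN
  obtain ⟨S₀, hS₀mem, hS₀max⟩ := Finset.exists_max_image Rows.powerset
    (fun S => (S.card : ℤ) - (N S).card) ⟨∅, Finset.empty_mem_powerset _⟩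
  have hS₀Rows : S₀ ⊆ Rows := Finset.mem_powerset.mp hS₀mem
  have hNempty : N ∅ = ∅ := by simp [hN]
  have hNle : (N S₀).card ≤ S₀.card := by
    have h := hS₀max ∅ (Finset.empty_mem_powerset _)
    rw [hNempty] at h
    simp at h
    exact_mod_cast h
  set d : ℕ := S₀.card - (N S₀).card with hdd
  have hd : (d : ℤ) = (S₀.card : ℤ) - (N S₀).card := by
    rw [hdd]; push_cast [hNle]; ring
  -- Hall setup
  set t : {x // x ∈ Rows} → Finset (Fin n ⊕ Fin d) :=
    fun x => (N {x.1}).disjSum Finset.univ with ht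
  have hall : ∀ s : Finset {x // x ∈ Rows}, s.card ≤ (s.biUnion t).card := by
    intro s
    rcases s.eq_empty_or_nonempty with rfl | ⟨x₀, hx₀⟩
    · simp
    set S : Finset (Fin m) := s.image (fun x => x.1) with hS
    have hScard : S.card = s.card := Finset.card_image_of_injective _ Subtype.val_injective
    have hSsub : S ⊆ Rows := by
      intro a ha
      obtain ⟨x, hx, rfl⟩ := Finset.mem_image.mp ha
      exact x.2
    have hsub : (N S).disjSum Finset.univ ⊆ s.biUnion t := by
      intro y hy
      rw [Finset.mem_disjSum] at hy
      rcases hy with ⟨c, hc, rfl⟩ | ⟨b, _, rfl⟩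
      · obtain ⟨p, hp, rfl⟩ := Finset.mem_image.mp hc
        rw [Finset.mem_filter] at hp
        obtain ⟨hpZ, hpS⟩ := hp
        obtain ⟨x, hxs, hx1⟩ := Finset.mem_image.mp hpS
        refine Finset.mem_biUnion.mpr ⟨x, hxs, ?_⟩
        rw [ht]
        rw [Finset.inl_mem_disjSum]
        exact Finset.mem_image.mpr ⟨p, Finset.mem_filter.mpr ⟨hpZ, by simp [hx1]⟩, rfl⟩
      · exact Finset.mem_biUnion.mpr ⟨x₀, hx₀, by rw [ht]; simp⟩
    have hkey : (S.card : ℤ) - (N S).card ≤ d := by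
      rw [hd]; exact hS₀max S (Finset.mem_powerset.mpr hSsub)
    have : s.card ≤ (N S).card + d := by
      rw [← hScard]; omega
    calc s.card ≤ (N S).card + d := this
      _ = ((N S).disjSum Finset.univ).card := by
            rw [Finset.card_disjSum]; simp
      _ ≤ (s.biUnion t).card := Finset.card_le_card hsub
  obtain ⟨f, hfinj, hf⟩ := (Finset.all_card_le_biUnion_card_iff_exists_injective t).mp hall
  -- build matching
  set g : Fin n ⊕ Fin d → Finset (Fin n) := Sum.elim (fun c => {c}) (fun _ => ∅) with hg
  have hgmem : ∀ y c, c ∈ g y → y = Sum.inl c := by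
    intro y c hc
    rcases y with c' | b <;> simp [hg] at hc
    rw [hc]
  set μ : Finset (Fin m × Fin n) :=
    (Finset.univ : Finset {x // x ∈ Rows}).biUnion
      (fun x => (g (f x)).image (fun c => (x.1, c))) with hμdef
  have hμmem : ∀ p ∈ μ, ∃ x : {x // x ∈ Rows}, p.1 = x.1 ∧ f x = Sum.inl p.2 := by
    intro p hp
    obtain ⟨x, _, hx⟩ := Finset.mem_biUnion.mp hp
    obtain ⟨c, hc, rfl⟩ := Finset.mem_image.mp hx
    exact ⟨x, rfl, (hgmem _ _ hc).symm ▸ rfl⟩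
  have hμZ : μ ⊆ Z := by
    intro p hp
    obtain ⟨x, hp1, hfx⟩ := hμmem p hp
    have := hf x
    rw [ht, hfx, Finset.inl_mem_disjSum] at this
    obtain ⟨q, hq, hq2⟩ := Finset.mem_image.mp this
    rw [Finset.mem_filter] at hq
    have hq1 : q.1 = x.1 := Finset.mem_singleton.mp hq.2
    have : q = p := Prod.ext (by rw [hq1, hp1]) hq2
    exact this ▸ hq.1
  have hμind : Indep μ := by
    intro p hp q hq hne
    obtain ⟨x, hp1, hfx⟩ := hμmem p hp
    obtain ⟨y, hq1, hfy⟩ := hμmem q hq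
    have hxy : x ≠ y := by
      rintro rfl
      apply hne
      have : p.2 = q.2 := by
        have := hfx.symm.trans hfy
        exact Sum.inl.inj this
      exact Prod.ext (hp1.trans hq1.symm) this
    constructor
    · rw [hp1, hq1]
      exact fun h => hxy (Subtype.ext h)
    · intro h
      apply hxy
      apply hfinj
      rw [hfx, hfy, h]
  have hμcard : Rows.card ≤ μ.card + d := by
    have hdisj : (↑(Finset.univ : Finset {x // x ∈ Rows}) : Set {x // x ∈ Rows}).PairwiseDisjoint
        (fun x => (g (f x)).image (fun c => (x.1, c))) := by
      intro x _ y _ hxy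
      simp only [Function.onFun]
      rw [Finset.disjoint_left]
      intro p hp hq
      obtain ⟨c, _, rfl⟩ := Finset.mem_image.mp hp
      obtain ⟨c', _, he⟩ := Finset.mem_image.mp hq
      apply hxy
      apply Subtype.ext
      exact (congrArg Prod.fst he).symm
    have hcard1 : μ.card = ∑ x : {x // x ∈ Rows}, (g (f x)).card := by
      rw [hμdef, Finset.card_biUnion hdisj]
      apply Finset.sum_congr rfl
      intro x _
      exact Finset.card_image_of_injective _ (fun a b h => (Prod.mk.injEq _ _ _ _).mp h |>.2)
    have hcard2 : ∑ x : {x // x ∈ Rows}, (g (f x)).card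
        = (Finset.univ.filter (fun x : {x // x ∈ Rows} => (f x).isLeft)).card := by
      rw [Finset.card_filter]
      apply Finset.sum_congr rfl
      intro x _
      cases hfx : f x <;> simp [hg]
    have hR : (Finset.univ.filter (fun x : {x // x ∈ Rows} => ¬ (f x).isLeft)).card ≤ d := by
      have himg : (Finset.univ.filter
          (fun x : {x // x ∈ Rows} => ¬ (f x).isLeft)).image f
          ⊆ (∅ : Finset (Fin n)).disjSum Finset.univ := by
        intro y hy
        obtain ⟨x, hx, rfl⟩ := Finset.mem_image.mp hy
        rw [Finset.mem_filter] at hx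
        cases hfx : f x with
        | inl c => simp [hfx] at hx
        | inr b => rw [Finset.inr_mem_disjSum]; exact Finset.mem_univ _
      calc (Finset.univ.filter (fun x : {x // x ∈ Rows} => ¬ (f x).isLeft)).card
          = ((Finset.univ.filter
              (fun x : {x // x ∈ Rows} => ¬ (f x).isLeft)).image f).card :=
            (Finset.card_image_of_injective _ hfinj).symm
        _ ≤ ((∅ : Finset (Fin n)).disjSum Finset.univ).card := Finset.card_le_card himg
        _ = d := by rw [Finset.card_disjSum]; simp
    have hLR := Finset.card_filter_add_card_filter_not
      (s := (Finset.univ : Finset {x // x ∈ Rows}))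
      (p := fun x => (f x).isLeft)
    rw [Finset.card_univ, Fintype.card_coe] at hLR
    omega
  have hrank := hr.2 μ hμZ hμind
  refine ⟨Rows \ S₀, N S₀, ?_, ?_⟩
  · intro p hp
    by_cases h : p.1 ∈ S₀
    · right
      exact Finset.mem_image.mpr ⟨p, Finset.mem_filter.mpr ⟨hp, h⟩, rfl⟩
    · left
      exact Finset.mem_sdiff.mpr ⟨Finset.mem_image.mpr ⟨p, hp, rfl⟩, h⟩
  · rw [Finset.card_sdiff_of_subset hS₀Rows]
    have := Finset.card_le_card hS₀Rows
    omega

/-- if `rank(Z ∪ {(i,j)}) = rank Z + 1`, then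
`I_k(Z ∪ {(i,j)}) = I_k(Z)/i`, i.e. `X ∈ I_k(Z ∪ {(i,j)}) ↔ X ∪ {i} ∈ I_k(Z)`. -/
theorem Ik_insert_eq_Ik_quotient
    (k : ℕ) (hk : 1 ≤ k) (Z : Finset (Fin m × Fin n)) (i : Fin m) (j : Fin n)
    (r : ℕ) (hr : IsRank Z r) (hr' : IsRank (insert (i, j) Z) (r + 1)) :
    ∀ X : Finset (Fin m), InIk k (insert (i, j) Z) X ↔ InIk k Z (insert i X) := by
  classical
  intro X
  obtain ⟨A₀, B₀, hcov₀, hcard₀⟩ := exists_cover_card_le_rank Z r hr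
  set C := insert i A₀ with hC
  have hcovC : Covers C B₀ (insert (i, j) Z) := by
    intro p hp
    rcases Finset.mem_insert.mp hp with rfl | hp
    · exact Or.inl (Finset.mem_insert_self i A₀)
    · rcases hcov₀ p hp with h | h
      · exact Or.inl (Finset.mem_insert_of_mem h)
      · exact Or.inr h
  have hcardC : C.card + B₀.card ≤ r + 1 := by
    rw [hC]
    have := Finset.card_insert_le i A₀; omega
  obtain ⟨μ', hμ'Z, hμ'ind, hμ'card⟩ := hr'.1
  constructor
  · rintro ⟨A, B, hXA, hcov, hcard⟩
    refine ⟨A ∪ C, B ∩ B₀, ?_, ?_, ?_⟩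
    · intro a ha
      rcases Finset.mem_insert.mp ha with rfl | ha
      · exact Finset.mem_union_right _ (Finset.mem_insert_self _ _)
      · exact Finset.mem_union_left _ (hXA ha)
    · intro p hp
      by_cases h1 : p.1 ∈ A
      · exact Or.inl (Finset.mem_union_left _ h1)
      by_cases h2 : p.1 ∈ C
      · exact Or.inl (Finset.mem_union_right _ h2)
      have hb : p.2 ∈ B := (hcov p (Finset.mem_insert_of_mem hp)).resolve_left h1
      have hb₀ : p.2 ∈ B₀ := by
        rcases hcovC p (Finset.mem_insert_of_mem hp) with h | h
        · exact absurd h h2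
        · exact h
      exact Or.inr (Finset.mem_inter.mpr ⟨hb, hb₀⟩)
    · have hsub1 : r + 1 ≤ (A ∩ C).card + (B ∪ B₀).card := by
        rw [← hμ'card]
        refine indep_card_le_cover _ _ _ ?_ μ' hμ'Z hμ'ind
        intro p hp
        by_cases ha : p.1 ∈ A
        · by_cases hc : p.1 ∈ C
          · exact Or.inl (Finset.mem_inter.mpr ⟨ha, hc⟩)
          · have := (hcovC p hp).resolve_left hc
            exact Or.inr (Finset.mem_union_right _ this)
        · have := (hcov p hp).resolve_left ha
          exact Or.inr (Finset.mem_union_left _ this)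
      have e1 : (A ∪ C).card + (A ∩ C).card = A.card + C.card :=
        Finset.card_union_add_card_inter A C
      have e2 : (B ∪ B₀).card + (B ∩ B₀).card = B.card + B₀.card :=
        Finset.card_union_add_card_inter B B₀
      omega
  · rintro ⟨A, B, hXA, hcov, hcard⟩
    refine ⟨A, B, fun a ha => hXA (Finset.mem_insert_of_mem ha), ?_, hcard⟩
    intro p hp
    rcases Finset.mem_insert.mp hp with rfl | hp
    · exact Or.inl (hXA (Finset.mem_insert_self i X))
    · exact hcov p hp
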